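/- Let K be a real algebraic number field of degree d = s + 2t ≥ 2, with embeddings σ_1 = id, the other real embeddings σ_2, ..., σ_s, and representatives σ_{s+1}, ..., σ_{s+t} of the pairs of complex-conjugate non-real embeddings. Then the set {(σ_2(θ), ..., σ_{s+t}(θ)) : θ ∈ ℘_K} is dense in [-1, 1]^{s-1} × D̄^t, where D̄ = {z ∈ ℂ : |z| ≤ 1} is the closed unit disc. -/

import Mathlib

open IntermediateField

/-- The "identity" embedding of a real number field `K ⊆ ℝ` into `ℂ`. -/
noncomputable def iotaK (K : IntermediateField ℚ ℝ) : ↥K →+* ℂ :=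
  Complex.ofRealHom.comp (algebraMap ↥K ℝ)

/-- `℘_K`: the set of Pisot numbers `θ ∈ K` with `ℚ(θ) = K`. -/
def pisotGen (K : IntermediateField ℚ ℝ) : Set ↥K :=
  {θ | IsIntegral ℤ θ ∧ 1 < (θ : ℝ) ∧
    IntermediateField.adjoin ℚ ({θ} : Set ↥K) = ⊤ ∧
    ∀ σ : ↥K →+* ℂ, σ ≠ iotaK K → ‖σ θ‖ < 1}

open NumberField NumberField.InfinitePlace Module NumberField.mixedEmbedding
open scoped NNReal

set_option linter.unusedSectionVars false
set_option maxHeartbeats 1000000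

section PisotAux

variable (K : IntermediateField ℚ ℝ) [FiniteDimensional ℚ K]

theorem numberFieldK : NumberField ↥K :=
  { to_charZero := charZero_of_injective_algebraMap (algebraMap ℚ ↥K).injective,
    to_finiteDimensional := ‹_› }

theorem conj_comp_iotaK : (starRingEnd ℂ).comp (iotaK K) = iotaK K := by
  ext x; simp [iotaK, Complex.conj_ofReal]

theorem isReal_iotaK : ComplexEmbedding.IsReal (iotaK K) :=
  ComplexEmbedding.isReal_iff.mpr (conj_comp_iotaK K)

theorem eq_iotaK_of_conj {σ : ↥K →+* ℂ} (h : ComplexEmbedding.conjugate σ = iotaK K) :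
    σ = iotaK K := by
  have h2 : ComplexEmbedding.conjugate (ComplexEmbedding.conjugate σ) = σ := by
    ext x; simp [ComplexEmbedding.conjugate]
  rw [← h2, h]; exact conj_comp_iotaK K

theorem mk_ne_mk_iotaK {σ : ↥K →+* ℂ} (hσ : σ ≠ iotaK K) :
    haveI := numberFieldK K
    InfinitePlace.mk σ ≠ InfinitePlace.mk (iotaK K) := by
  haveI := numberFieldK K
  intro h
  rcases mk_eq_iff.mp h with h' | h'
  · exact hσ h'
  · exact hσ (eq_iotaK_of_conj K h')

theorem exists_pisot_like (hd : 2 ≤ finrank ℚ ↥K) :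
    ∃ u : ↥K, IsIntegral ℤ u ∧ 1 < (u : ℝ) ∧
      ∀ σ : ↥K →+* ℂ, σ ≠ iotaK K → ‖σ u‖ ≤ 1/2 := by
  classical
  haveI := numberFieldK K
  set w₀ : InfinitePlace ↥K := InfinitePlace.mk (iotaK K) with hw₀
  have hw₀real : IsReal w₀ := ⟨iotaK K, isReal_iotaK K, rfl⟩
  -- choose B
  obtain ⟨B, hB⟩ : ∃ B : ℝ≥0, minkowskiBound ↥K 1 < convexBodyLTFactor ↥K * B := by
    have h1 : minkowskiBound ↥K 1 ≠ ⊤ := (minkowskiBound_lt_top ↥K 1).ne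
    have h0 : (convexBodyLTFactor ↥K : ENNReal) ≠ 0 := by
      exact_mod_cast convexBodyLTFactor_ne_zero ↥K
    obtain ⟨n, hn⟩ := ENNReal.exists_nat_gt h1
    obtain ⟨m, hm⟩ := ENNReal.exists_nat_gt (ENNReal.inv_ne_top.mpr h0)
    refine ⟨m * n, ?_⟩
    have hone : (1 : ENNReal) ≤ (convexBodyLTFactor ↥K : ENNReal) * m := by
      rw [← ENNReal.mul_inv_cancel h0 ENNReal.coe_ne_top]
      exact mul_le_mul_right hm.le _
    calc minkowskiBound ↥K 1 < n := hn
    _ = 1 * (n : ENNReal) := (one_mul _).symm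
    _ ≤ ((convexBodyLTFactor ↥K : ENNReal) * m) * n := mul_le_mul_left hone _
    _ = (convexBodyLTFactor ↥K : ENNReal) * ((m * n : ℝ≥0) : ENNReal) := by
        push_cast; ring
  -- adjust f
  obtain ⟨g, h_geqf, h_gprod⟩ := adjust_f ↥K (w₁ := w₀) B
    (f := fun _ => 1/2) (fun w _ => by norm_num)
  obtain ⟨a, ha0, haw⟩ := exists_ne_zero_mem_ringOfIntegers_lt ↥K (f := g)
    (by
      rw [convexBodyLT_volume]
      refine lt_of_lt_of_eq hB ?_
      rw [← h_gprod])
  have haK : ((a : ↥K)) ≠ 0 := RingOfIntegers.coe_ne_zero_iff.mpr ha0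
  have haw' : ∀ w : InfinitePlace ↥K, w ≠ w₀ → w (a : ↥K) < 1/2 := by
    intro w hw
    have := haw w
    rw [h_geqf w hw] at this
    simpa using this
  -- norm at least one
  have hnorm : (1 : ℝ) ≤ |(Algebra.norm ℚ ((a : ↥K)) : ℚ)| := by
    rw [← Algebra.coe_norm_int, ← Int.cast_one, ← Int.cast_abs, Rat.cast_intCast, Int.cast_le]
    exact Int.one_le_abs (Algebra.norm_ne_zero_iff.mpr ha0)
  have hprodall : (1 : ℝ) ≤ ∏ w : InfinitePlace ↥K, w (a : ↥K) ^ mult w := by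
    rw [prod_eq_abs_norm]
    exact_mod_cast hnorm
  -- another place exists
  obtain ⟨w', hw'⟩ : ∃ w' : InfinitePlace ↥K, w' ≠ w₀ := by
    by_contra h
    push_neg at h
    have huniv : (Finset.univ : Finset (InfinitePlace ↥K)) = {w₀} := by
      apply Finset.eq_singleton_iff_unique_mem.mpr
      exact ⟨Finset.mem_univ _, fun w _ => h w⟩
    have := sum_mult_eq (K := ↥K)
    rw [huniv, Finset.sum_singleton, mult, if_pos hw₀real] at this
    omega
  -- w₀ a > 1
  have hw₀a : 1 < w₀ (a : ↥K) := by
    by_contra hle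
    push_neg at hle
    rw [← Finset.mul_prod_erase Finset.univ (fun w => w (a : ↥K) ^ mult w)
      (Finset.mem_univ w₀)] at hprodall
    have h2 : ∏ w ∈ Finset.univ.erase w₀, w (a : ↥K) ^ mult w < 1 := by
      have hne : (Finset.univ.erase w₀).Nonempty :=
        ⟨w', Finset.mem_erase.mpr ⟨hw', Finset.mem_univ _⟩⟩
      have := Finset.prod_lt_prod_of_nonempty (f := fun w => w (a : ↥K) ^ mult w)
        (g := fun _ => (1:ℝ)) (fun w _ => pow_pos (pos_iff.mpr haK) _)
        (fun w hw => pow_lt_one₀ (apply_nonneg _ _)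
          ((haw' w (Finset.mem_erase.mp hw).1).trans (by norm_num)) mult_ne_zero) hne
      simpa using this
    have h3 : w₀ (a : ↥K) ^ mult w₀ ≤ 1 := pow_le_one₀ (apply_nonneg _ _) hle
    nlinarith [Finset.prod_nonneg (fun w (_ : w ∈ Finset.univ.erase w₀) =>
      pow_nonneg (apply_nonneg w (a : ↥K)) (mult w))]
  have habs : w₀ (a : ↥K) = |((a : ↥K) : ℝ)| := by
    rw [hw₀, apply, iotaK]
    simp [Complex.norm_real]
  -- define u
  have hbound : ∀ σ : ↥K →+* ℂ, σ ≠ iotaK K → ‖σ (a : ↥K)‖ ≤ 1/2 := by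
    intro σ hσ
    have : (InfinitePlace.mk σ) (a : ↥K) < 1/2 := haw' _ (mk_ne_mk_iotaK K hσ)
    rw [apply] at this
    exact this.le
  rcases le_or_gt ((a : ↥K) : ℝ) 0 with h | h
  · refine ⟨-(a : ↥K), (RingOfIntegers.isIntegral_coe a).neg, ?_, ?_⟩
    · have h4 : ((-(a : ↥K) : ↥K) : ℝ) = -((a : ↥K) : ℝ) := by push_cast; ring
      rw [h4]
      have := habs ▸ hw₀a
      rw [abs_of_nonpos h] at this
      exact this
    · intro σ hσ
      rw [map_neg σ, norm_neg]
      exact hbound σ hσ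
  · refine ⟨(a : ↥K), RingOfIntegers.isIntegral_coe a, ?_, hbound⟩
    rw [← abs_of_pos h, ← habs]
    exact hw₀a

/-- Step (a): the complex span of the conjugate-vectors is everything. -/
theorem spanC_top :
    haveI := numberFieldK K
    Submodule.span ℂ (Set.range (fun θ : ↥K => fun σ : ↥K →+* ℂ => (σ θ : ℂ))) = ⊤ := by
  haveI := numberFieldK K
  classical
  set Φ : ↥K → ((↥K →+* ℂ) → ℂ) := fun θ σ => σ θ with hΦ
  by_contra hne
  have hlt : Submodule.span ℂ (Set.range Φ) < ⊤ := lt_of_le_of_ne le_top hne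
  obtain ⟨ℓ, hℓ0, hℓmap⟩ :=
    Submodule.exists_dual_map_eq_bot_of_lt_top hlt inferInstance
  set c : (↥K →+* ℂ) → ℂ := fun σ => ℓ (fun j => if σ = j then (1:ℂ) else 0) with hc
  have hrep : ∀ v : (↥K →+* ℂ) → ℂ, ℓ v = ∑ σ, v σ * c σ := by
    intro v
    conv_lhs => rw [pi_eq_sum_univ v, map_sum]
    refine Finset.sum_congr rfl fun σ _ => ?_
    rw [map_smul]
    simp [hc, smul_eq_mul]
  have hvan : ∀ θ : ↥K, ℓ (Φ θ) = 0 := by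
    intro θ
    have h1 : Φ θ ∈ Submodule.span ℂ (Set.range Φ) := Submodule.subset_span ⟨θ, rfl⟩
    have h2 := Submodule.mem_map_of_mem (f := ℓ) h1
    rw [hℓmap] at h2
    exact h2
  -- Dedekind
  have hLI : LinearIndependent ℂ (fun σ : ↥K →+* ℂ => (σ : ↥K → ℂ)) := by
    have h := linearIndependent_monoidHom ↥K ℂ
    have hinj : Function.Injective (fun σ : ↥K →+* ℂ => (σ : ↥K →* ℂ)) := by
      intro σ τ h'
      ext x
      exact DFunLike.congr_fun h' x
    exact h.comp _ hinj
  have hczero : ∀ σ, c σ = 0 := by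
    refine Fintype.linearIndependent_iff.mp hLI c ?_
    funext θ
    have := hvan θ
    rw [hrep] at this
    simpa [Finset.sum_apply, mul_comm] using this
  exact hℓ0 (LinearMap.ext fun v => by rw [hrep]; simp [hczero])

/-- Step (b): conjugation-compatible vectors lie in the real span. -/
theorem mem_realSpan_of_conj_compat (v : (↥K →+* ℂ) → ℂ)
    (hv : ∀ σ : ↥K →+* ℂ, v ((starRingEnd ℂ).comp σ) = (starRingEnd ℂ) (v σ)) :
    v ∈ Submodule.span ℝ (Set.range (fun θ : ↥K => fun σ : ↥K →+* ℂ => (σ θ : ℂ))) := by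
  haveI := numberFieldK K
  classical
  set Φ : ↥K → ((↥K →+* ℂ) → ℂ) := fun θ σ => σ θ with hΦ
  have hmem : v ∈ Submodule.span ℂ (Set.range Φ) := by rw [spanC_top K]; trivial
  obtain ⟨n, c, g, hsum⟩ := Submodule.mem_span_set'.mp hmem
  set G : Fin n → ((↥K →+* ℂ) → ℂ) := fun i => (g i).1 with hG
  have hval : ∀ σ : ↥K →+* ℂ, v σ = ∑ i, c i * G i σ := by
    intro σ
    rw [← hsum]
    simp [Finset.sum_apply, smul_eq_mul]
    rfl
  have hconjg : ∀ i (σ : ↥K →+* ℂ),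
      G i ((starRingEnd ℂ).comp σ) = (starRingEnd ℂ) (G i σ) := by
    intro i σ
    obtain ⟨θ, hθ⟩ := (g i).2
    show (g i).1 ((starRingEnd ℂ).comp σ) = (starRingEnd ℂ) ((g i).1 σ)
    rw [← hθ]
    rfl
  have hcomp : ∀ σ : ↥K →+* ℂ, (starRingEnd ℂ).comp ((starRingEnd ℂ).comp σ) = σ := by
    intro σ; ext x; simp
  -- key : imaginary parts cancel
  have key : ∀ σ : ↥K →+* ℂ, ∑ i, ((c i).im : ℂ) * G i σ = 0 := by
    have key0 : ∀ σ : ↥K →+* ℂ,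
        ∑ i, (c i - (starRingEnd ℂ) (c i)) * (starRingEnd ℂ) (G i σ) = 0 := by
      intro σ
      have h1 : v ((starRingEnd ℂ).comp σ) = ∑ i, c i * (starRingEnd ℂ) (G i σ) := by
        rw [hval]
        exact Finset.sum_congr rfl fun i _ => by rw [hconjg]
      have h2 : v ((starRingEnd ℂ).comp σ)
          = ∑ i, (starRingEnd ℂ) (c i) * (starRingEnd ℂ) (G i σ) := by
        rw [hv σ, hval σ, map_sum]
        exact Finset.sum_congr rfl fun i _ => by rw [map_mul]
      have := h1.symm.trans h2
      rw [← sub_eq_zero] at this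
      rw [← this, ← Finset.sum_sub_distrib]
      exact Finset.sum_congr rfl fun i _ => by ring
    intro σ
    have h3 := key0 ((starRingEnd ℂ).comp σ)
    have h4 : ∀ i, (starRingEnd ℂ) (G i ((starRingEnd ℂ).comp σ)) = G i σ := by
      intro i
      rw [hconjg]
      simp
    have h5 : ∑ i, (c i - (starRingEnd ℂ) (c i)) * G i σ = 0 := by
      rw [← h3]
      exact Finset.sum_congr rfl fun i _ => by rw [h4]
    have h6 : ∀ z : ℂ, z - (starRingEnd ℂ) z = (2 * z.im : ℝ) * Complex.I := fun z =>
      Complex.sub_conj z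
    have h7 : (2 * Complex.I) * ∑ i, ((c i).im : ℂ) * G i σ = 0 := by
      rw [Finset.mul_sum, ← h5]
      refine Finset.sum_congr rfl fun i _ => ?_
      rw [h6 (c i)]
      push_cast
      ring
    have h8 : (2 * Complex.I) ≠ 0 := by simp [Complex.I_ne_zero]
    exact (mul_eq_zero.mp h7).resolve_left h8
  -- conclude
  have hfinal : v = ∑ i, (c i).re • G i := by
    funext σ
    rw [Finset.sum_apply]
    rw [hval σ]
    have : ∀ i, c i * G i σ
        = (c i).re • G i σ + ((c i).im : ℂ) * G i σ * Complex.I := by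
      intro i
      rw [Complex.real_smul]
      rw [← Complex.re_add_im (c i)]
      push_cast
      ring_nf
      simp [Complex.re_add_im]
      ring
    rw [Finset.sum_congr rfl fun i _ => this i, Finset.sum_add_distrib]
    have h9 : ∑ i, ((c i).im : ℂ) * G i σ * Complex.I
        = (∑ i, ((c i).im : ℂ) * G i σ) * Complex.I := by
      rw [Finset.sum_mul]
    rw [h9, key σ, zero_mul, add_zero]
    rfl
  rw [hfinal]
  exact Submodule.sum_mem _ fun i _ =>
    Submodule.smul_mem _ _ (Submodule.subset_span (g i).2)

/-- The key approximation lemma. -/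
theorem approx_lemma (hd : 2 ≤ finrank ℚ ↥K) (y : (↥K →+* ℂ) → ℂ)
    (hy : ∀ σ : ↥K →+* ℂ, y ((starRingEnd ℂ).comp σ) = (starRingEnd ℂ) (y σ))
    {δ : ℝ} (hδ : 0 < δ) :
    ∃ θ : ↥K, IsIntegral ℤ θ ∧ 1 < (θ : ℝ) ∧
      ∀ σ : ↥K →+* ℂ, σ ≠ iotaK K → ‖y σ - σ θ‖ < δ := by
  classical
  haveI := numberFieldK K
  obtain ⟨u, hu_int, hu_gt, hu_small⟩ := exists_pisot_like K hd
  have hu0 : (u : ↥K) ≠ 0 := by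
    intro h
    rw [h] at hu_gt
    norm_num at hu_gt
  -- the restricted conjugate map
  set E' := {σ : ↥K →+* ℂ // σ ≠ iotaK K} with hE'
  set π : ↥K →+ (E' → ℂ) :=
    { toFun := fun θ σ => σ.1 θ,
      map_zero' := by funext σ; exact map_zero σ.1,
      map_add' := by intro a b; funext σ; exact map_add σ.1 a b } with hπ
  set Ints : Set ↥K := {θ | IsIntegral ℤ θ} with hInts
  set W' : Submodule ℝ (E' → ℂ) := Submodule.span ℝ (π '' Ints) with hW'
  set z : E' → ℂ := fun σ => y σ.1 with hz
  -- z ∈ W'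
  have hzW : z ∈ W' := by
    have h1 := mem_realSpan_of_conj_compat K y hy
    -- span over all of K is contained in span over integral elements
    have h2 : Submodule.span ℝ (Set.range (fun θ : ↥K => fun σ : ↥K →+* ℂ => (σ θ : ℂ)))
        ≤ Submodule.span ℝ ((fun θ : ↥K => fun σ : ↥K →+* ℂ => (σ θ : ℂ)) '' Ints) := by
      rw [Submodule.span_le]
      rintro _ ⟨θ, rfl⟩
      have halg : IsAlgebraic ℤ θ := by
        rw [IsFractionRing.isAlgebraic_iff ℤ ℚ ↥K]
        exact (IsIntegral.of_finite ℚ θ).isAlgebraic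
      obtain ⟨m, hm0, hmint'⟩ := halg.exists_integral_multiple
      have hmint : IsIntegral ℤ ((m : ↥K) * θ) := by
        rw [Algebra.smul_def, algebraMap_int_eq, eq_intCast] at hmint'
        exact hmint'
      have hmne : ((m : ℝ)) ≠ 0 := Int.cast_ne_zero.mpr hm0
      have hkey : (fun σ : ↥K →+* ℂ => (σ θ : ℂ))
          = ((m : ℝ))⁻¹ • (fun σ : ↥K →+* ℂ => (σ ((m : ↥K) * θ) : ℂ)) := by
        funext σ
        rw [Pi.smul_apply, map_mul]
        have : (σ ((m : ℤ) : ↥K)) = ((m : ℤ) : ℂ) := by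
          rw [show ((m : ℤ) : ↥K) = algebraMap ℤ ↥K m by norm_cast]
          simp [map_intCast]
        rw [this, Complex.real_smul]
        push_cast
        rw [← mul_assoc,
          inv_mul_cancel₀ (show ((m : ℤ) : ℂ) ≠ 0 by exact_mod_cast hm0), one_mul]
      show (fun σ : ↥K →+* ℂ => (σ θ : ℂ)) ∈
        (Submodule.span ℝ ((fun θ : ↥K => fun σ : ↥K →+* ℂ => (σ θ : ℂ)) '' Ints) : Set _)
      rw [hkey]
      exact Submodule.smul_mem _ _ (Submodule.subset_span ⟨_, hmint, rfl⟩)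
    have h3 := h2 h1
    -- restrict
    set Rlin : ((↥K →+* ℂ) → ℂ) →ₗ[ℝ] (E' → ℂ) :=
      LinearMap.funLeft ℝ ℂ (fun σ : E' => (σ.1 : ↥K →+* ℂ)) with hR
    have h4 : Rlin y ∈ Submodule.map Rlin
        (Submodule.span ℝ ((fun θ : ↥K => fun σ : ↥K →+* ℂ => (σ θ : ℂ)) '' Ints)) :=
      Submodule.mem_map_of_mem h3
    rw [Submodule.map_span] at h4
    have h5 : Rlin '' ((fun θ : ↥K => fun σ : ↥K →+* ℂ => (σ θ : ℂ)) '' Ints) = π '' Ints := by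
      rw [Set.image_image]
      rfl
    rw [h5] at h4
    exact h4
  -- finite generating set T ⊆ π '' Ints with span T = W'
  obtain ⟨T, hTsub, hTspan⟩ : ∃ T : Finset (E' → ℂ), ↑T ⊆ π '' Ints ∧
      Submodule.span ℝ (↑T : Set (E' → ℂ)) = W' := by
    obtain ⟨G, hG⟩ := IsNoetherian.noetherian W'
    have hmem : ∀ g ∈ G, ∃ Tg : Finset (E' → ℂ), ↑Tg ⊆ π '' Ints ∧
        g ∈ Submodule.span ℝ (↑Tg : Set (E' → ℂ)) := by
      intro g hg
      have : g ∈ W' := hG ▸ Submodule.subset_span hg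
      exact Submodule.mem_span_finite_of_mem_span this
    choose! Tg hTg1 hTg2 using hmem
    refine ⟨G.biUnion Tg, ?_, ?_⟩
    · intro v hv
      rw [Finset.coe_biUnion] at hv
      simp only [Set.mem_iUnion] at hv
      obtain ⟨g, hg, hv⟩ := hv
      exact hTg1 g hg hv
    · refine le_antisymm ?_ ?_
      · rw [Submodule.span_le]
        intro v hv
        rw [Finset.coe_biUnion] at hv
        simp only [Set.mem_iUnion] at hv
        obtain ⟨g, hg, hv⟩ := hv
        exact Submodule.subset_span (hTg1 g hg hv)
      · rw [← hG, Submodule.span_le]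
        intro g hg
        exact Submodule.span_mono
          (Finset.coe_subset.mpr (Finset.subset_biUnion_of_mem Tg hg)) (hTg2 g hg)
  -- contraction D
  set D : (E' → ℂ) →ₗ[ℝ] (E' → ℂ) :=
    { toFun := fun v σ => σ.1 u * v σ,
      map_add' := by intro a b; funext σ; simp [mul_add],
      map_smul' := by intro r a; funext σ; simp [Complex.real_smul]; ring } with hD
  have hDinj : Function.Injective D := by
    intro a b h
    funext σ
    have h' := congrFun h σ
    simp only [hD, LinearMap.coe_mk, AddHom.coe_mk] at h'
    exact mul_left_cancel₀ ((map_ne_zero σ.1).mpr hu0) h'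
  have hDπ : ∀ θ : ↥K, D (π θ) = π (u * θ) := by
    intro θ
    funext σ
    simp [hD, hπ]
  have hDW : Submodule.map D W' ≤ W' := by
    rw [hW', Submodule.map_span, Submodule.span_le]
    rintro _ ⟨_, ⟨θ, hθ, rfl⟩, rfl⟩
    rw [hDπ]
    exact Submodule.subset_span ⟨u * θ, hu_int.mul hθ, rfl⟩
  have hDWeq : Submodule.map D W' = W' := by
    refine Submodule.eq_of_le_of_finrank_le hDW
      (le_of_eq (LinearEquiv.finrank_eq (Submodule.equivMapOfInjective D hDinj W')))
  -- powers of D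
  have hDpow_apply : ∀ (N : ℕ) (v : E' → ℂ) (σ : E'), (D ^ N) v σ = (σ.1 u) ^ N * v σ := by
    intro N
    induction N with
    | zero => intro v σ; simp
    | succ n ih =>
      intro v σ
      rw [pow_succ', Module.End.mul_apply]
      have hDvσ : D ((D ^ n) v) σ = σ.1 u * ((D ^ n) v σ) := rfl
      rw [hDvσ, ih v σ, pow_succ']
      ring
  have hDpow_map : ∀ N : ℕ, Submodule.map (D ^ N) W' = W' := by
    intro N
    induction N with
    | zero =>
      rw [pow_zero, Module.End.one_eq_id]
      exact Submodule.map_id W'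
    | succ n ih =>
      rw [pow_succ', Module.End.mul_eq_comp, Submodule.map_comp, ih, hDWeq]
  have hDpow_π : ∀ (N : ℕ) (θ : ↥K), (D ^ N) (π θ) = π (u ^ N * θ) := by
    intro N θ
    funext σ
    rw [hDpow_apply]
    simp only [hπ, AddMonoidHom.coe_mk, ZeroHom.coe_mk]
    rw [map_mul, map_pow]
  -- constants
  set C : ℝ := ∑ v ∈ T, ‖v‖ with hC
  have hC0 : 0 ≤ C := Finset.sum_nonneg fun v _ => norm_nonneg v
  obtain ⟨N, hN⟩ := exists_pow_lt_of_lt_one (x := δ / (2 * (C + 1)))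
    (by positivity) (by norm_num : (1:ℝ)/2 < 1)
  have hNbound : ((1:ℝ)/2) ^ N * C < δ / 2 := by
    have h1 : ((1:ℝ)/2) ^ N * C ≤ (δ / (2 * (C + 1))) * C := by
      apply mul_le_mul_of_nonneg_right hN.le hC0
    have h2 : (δ / (2 * (C + 1))) * C < δ / 2 := by
      rw [div_mul_eq_mul_div, div_lt_div_iff₀ (by positivity) (by norm_num)]
      nlinarith
    linarith
  -- representation of z
  have hzmem : z ∈ Submodule.map (D ^ N) W' := by rw [hDpow_map N]; exact hzW
  obtain ⟨w', hw'W, hw'z⟩ := hzmem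
  rw [← hTspan] at hw'W
  obtain ⟨t, -, ht⟩ := Submodule.mem_span_finset.mp hw'W
  -- integral preimages
  have hpre : ∀ v ∈ T, ∃ θ : ↥K, IsIntegral ℤ θ ∧ π θ = v := by
    intro v hv
    rcases hTsub hv with ⟨θ, hθ, rfl⟩
    exact ⟨θ, hθ, rfl⟩
  choose! Θ hΘint hΘπ using hpre
  -- candidate
  set θ₀ : ↥K := ∑ v ∈ T, (round (t v) : ℤ) • (u ^ N * Θ v) with hθ₀
  have hintcast : ∀ r : ℤ, IsIntegral ℤ ((r : ↥K)) := fun r => by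
    rw [show ((r : ℤ) : ↥K) = algebraMap ℤ ↥K r by rw [algebraMap_int_eq, eq_intCast]]
    exact isIntegral_algebraMap
  have hθ₀int : IsIntegral ℤ θ₀ := by
    refine IsIntegral.sum _ fun v hv => ?_
    rw [zsmul_eq_mul]
    exact (hintcast _).mul ((hu_int.pow N).mul (hΘint v hv))
  -- representations
  have hzrep : ∀ σ : E', z σ = ∑ v ∈ T, t v • ((D ^ N) v σ) := by
    intro σ
    rw [← hw'z, ← ht, map_sum, Finset.sum_apply]
    refine Finset.sum_congr rfl fun v hv => ?_
    rw [map_smul]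
    rfl
  have hπθ₀rep : ∀ σ : E', π θ₀ σ = ∑ v ∈ T, ((round (t v) : ℝ)) • ((D ^ N) v σ) := by
    intro σ
    rw [hθ₀, map_sum, Finset.sum_apply]
    refine Finset.sum_congr rfl fun v hv => ?_
    rw [AddMonoidHom.map_zsmul, ← hDpow_π, hΘπ v hv, Pi.smul_apply,
      ← Int.cast_smul_eq_zsmul ℝ]
  -- the estimate at each non-identity embedding
  have hest : ∀ σ : E', ‖y σ.1 - σ.1 θ₀‖ < δ / 2 := by
    intro σ
    have h1 : y σ.1 - σ.1 θ₀ = ∑ v ∈ T, ((t v - round (t v) : ℝ)) • ((D ^ N) v σ) := by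
      have h2 : σ.1 θ₀ = π θ₀ σ := rfl
      have h3 : y σ.1 = z σ := rfl
      rw [h2, hπθ₀rep σ, h3, hzrep σ, ← Finset.sum_sub_distrib]
      exact Finset.sum_congr rfl fun v hv => by rw [sub_smul]
    rw [h1]
    have h5 : ∀ v ∈ T, ‖(D ^ N) v σ‖ ≤ ((1:ℝ)/2) ^ N * ‖v‖ := by
      intro v hv
      rw [hDpow_apply, norm_mul, norm_pow]
      refine mul_le_mul (pow_le_pow_left₀ (norm_nonneg _) (hu_small σ.1 σ.2) N)
        ?_ (norm_nonneg _) (by positivity)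
      exact norm_le_pi_norm v σ
    have h4 : ‖∑ v ∈ T, ((t v - round (t v) : ℝ)) • ((D ^ N) v σ)‖
        ≤ ∑ v ∈ T, (1/2) * (((1:ℝ)/2) ^ N * ‖v‖) := by
      refine (norm_sum_le _ _).trans (Finset.sum_le_sum fun v hv => ?_)
      rw [Complex.real_smul, norm_mul, Complex.norm_real, Real.norm_eq_abs]
      exact mul_le_mul (abs_sub_round (t v)) (h5 v hv)
        (norm_nonneg _) (by norm_num)
    have h6 : ∑ v ∈ T, (1/2) * (((1:ℝ)/2) ^ N * ‖v‖) = (1/2) * (((1:ℝ)/2) ^ N * C) := by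
      rw [hC, Finset.mul_sum, Finset.mul_sum]
    have h7 : (1/2 : ℝ) * (((1:ℝ)/2) ^ N * C) ≤ ((1:ℝ)/2) ^ N * C := by
      nlinarith [pow_nonneg (by norm_num : (0:ℝ) ≤ 1/2) N]
    calc ‖∑ v ∈ T, ((t v - round (t v) : ℝ)) • ((D ^ N) v σ)‖
        ≤ ∑ v ∈ T, (1/2) * (((1:ℝ)/2) ^ N * ‖v‖) := h4
      _ = (1/2) * (((1:ℝ)/2) ^ N * C) := h6
      _ ≤ ((1:ℝ)/2) ^ N * C := h7
      _ < δ / 2 := hNbound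
  -- final candidate
  obtain ⟨M₁, hM₁⟩ := pow_unbounded_of_one_lt (R := ℝ) (1 - (θ₀ : ℝ)) hu_gt
  obtain ⟨M₂, hM₂⟩ := exists_pow_lt_of_lt_one (half_pos hδ) (by norm_num : (1:ℝ)/2 < 1)
  set M := M₁ + M₂ with hMdef
  refine ⟨θ₀ + u ^ M, hθ₀int.add (hu_int.pow M), ?_, ?_⟩
  · have hcast : ((θ₀ + u ^ M : ↥K) : ℝ) = (θ₀ : ℝ) + (u : ℝ) ^ M := by push_cast; ring
    rw [hcast]
    have h6 : (u : ℝ) ^ M₁ ≤ (u : ℝ) ^ M :=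
      pow_le_pow_right₀ hu_gt.le (Nat.le_add_right _ _)
    linarith
  · intro σ hσ
    have hσθ : σ (θ₀ + u ^ M) = σ θ₀ + (σ u) ^ M := by rw [map_add, map_pow]
    rw [hσθ]
    have h7 := hest ⟨σ, hσ⟩
    have h8 : ‖(σ u) ^ M‖ ≤ ((1:ℝ)/2) ^ M := by
      rw [norm_pow]
      exact pow_le_pow_left₀ (norm_nonneg _) (hu_small σ hσ) M
    have h9 : ((1:ℝ)/2) ^ M ≤ ((1:ℝ)/2) ^ M₂ :=
      pow_le_pow_of_le_one (by norm_num) (by norm_num) (Nat.le_add_left _ _)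
    calc ‖y σ - (σ θ₀ + (σ u) ^ M)‖
        = ‖(y σ - σ θ₀) + (-((σ u) ^ M))‖ := by congr 1; ring
      _ ≤ ‖y σ - σ θ₀‖ + ‖-((σ u) ^ M)‖ := norm_add_le _ _
      _ = ‖y σ - σ θ₀‖ + ‖(σ u) ^ M‖ := by
          rw [norm_neg]
      _ < δ / 2 + ((1:ℝ)/2) ^ M₂ := by
          have := h8.trans h9
          exact add_lt_add_of_lt_of_le h7 this
      _ < δ := by linarith

end PisotAux

/-- **Corollary 2.** Let `K` be a real number field of degree `≥ 2`.  A point of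
`[-1,1]^{s-1} × D̄^t` is encoded as a function `x` assigning to each embedding
`σ : K →+* ℂ` a complex number of modulus `≤ 1` (for `σ ≠` identity), compatible with
complex conjugation; this forces `x σ ∈ [-1,1]` for real `σ`, and the data of `x` on the
embeddings `≠` identity is exactly a point of `[-1,1]^{s-1} × D̄^t`.  Every such point is
approximated within any `ε > 0` by `(σ₂ θ, …, σ_{s+t} θ)` for some `θ ∈ ℘_K`, i.e. the set
`{(σ₂ θ, …, σ_{s+t} θ) : θ ∈ ℘_K}` is dense in `[-1,1]^{s-1} × D̄^t`. -/

theorem pisotGen_conjugates_dense (K : IntermediateField ℚ ℝ) [FiniteDimensional ℚ K]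
    (hd : 2 ≤ Module.finrank ℚ ↥K)
    (x : (↥K →+* ℂ) → ℂ)
    (hx₁ : ∀ σ : ↥K →+* ℂ, σ ≠ iotaK K → ‖x σ‖ ≤ 1)
    (hx₂ : ∀ σ : ↥K →+* ℂ, x ((starRingEnd ℂ).comp σ) = starRingEnd ℂ (x σ))
    (ε : ℝ) (hε : 0 < ε) :
    ∃ θ ∈ pisotGen K, ∀ σ : ↥K →+* ℂ, σ ≠ iotaK K → ‖x σ - σ θ‖ < ε := by
  classical
  haveI := numberFieldK K
  set c := min ε 1 with hc
  have hc0 : 0 < c := lt_min hε one_pos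
  have hc1 : c ≤ 1 := min_le_right _ _
  have hcε : c ≤ ε := min_le_left _ _
  set y : (↥K →+* ℂ) → ℂ := fun σ => ((1 - c/2 : ℝ) : ℂ) * x σ with hy
  have hycompat : ∀ σ : ↥K →+* ℂ, y ((starRingEnd ℂ).comp σ) = (starRingEnd ℂ) (y σ) := by
    intro σ
    rw [hy]
    simp only
    rw [hx₂ σ, map_mul, Complex.conj_ofReal]
  obtain ⟨θ, hθint, hθgt, hθapprox⟩ := approx_lemma K hd y hycompat
    (show (0:ℝ) < c/4 by linarith)
  have hbound : ∀ σ : ↥K →+* ℂ, σ ≠ iotaK K → ‖σ θ‖ < 1 := by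
    intro σ hσ
    have h1 := hθapprox σ hσ
    have h2 : ‖y σ‖ ≤ 1 - c/2 := by
      rw [hy]
      simp only
      rw [norm_mul, Complex.norm_real, Real.norm_eq_abs, abs_of_nonneg (by linarith : (0:ℝ) ≤ 1 - c/2)]
      calc (1 - c/2) * ‖x σ‖ ≤ (1 - c/2) * 1 :=
        mul_le_mul_of_nonneg_left (hx₁ σ hσ) (by linarith)
      _ = 1 - c/2 := mul_one _
    calc ‖σ θ‖ = ‖y σ - (y σ - σ θ)‖ := by congr 1; ring
      _ ≤ ‖y σ‖ + ‖y σ - σ θ‖ := by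
          rw [sub_eq_add_neg]
          have h := norm_add_le (y σ) (-(y σ - σ θ))
          rwa [norm_neg] at h
      _ < (1 - c/2) + c/4 := by exact add_lt_add_of_le_of_lt h2 h1
      _ < 1 := by linarith
  have happrox : ∀ σ : ↥K →+* ℂ, σ ≠ iotaK K → ‖x σ - σ θ‖ < ε := by
    intro σ hσ
    have h1 := hθapprox σ hσ
    have h2 : ‖x σ - y σ‖ ≤ c/2 := by
      rw [hy]
      simp only
      have h3 : x σ - ((1 - c/2 : ℝ) : ℂ) * x σ = ((c/2 : ℝ) : ℂ) * x σ := by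
        push_cast; ring
      rw [h3, norm_mul, Complex.norm_real, Real.norm_eq_abs, abs_of_nonneg (by linarith : (0:ℝ) ≤ c/2)]
      calc (c/2) * ‖x σ‖ ≤ (c/2) * 1 :=
        mul_le_mul_of_nonneg_left (hx₁ σ hσ) (by linarith)
      _ = c/2 := mul_one _
    calc ‖x σ - σ θ‖ = ‖(x σ - y σ) + (y σ - σ θ)‖ := by congr 1; ring
      _ ≤ ‖x σ - y σ‖ + ‖y σ - σ θ‖ := norm_add_le _ _
      _ < c/2 + c/4 := add_lt_add_of_le_of_lt h2 h1
      _ ≤ ε := by linarith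
  -- primitivity
  have hθ0 : θ ≠ 0 := by
    intro h
    rw [h] at hθgt
    norm_num at hθgt
  have hadj : IntermediateField.adjoin ℚ ({θ} : Set ↥K) = ⊤ := by
    have hX : (⟨θ, hθint⟩ : 𝓞 ↥K) ≠ 0 := by
      intro h
      exact hθ0 (congrArg Subtype.val h)
    have h₂ : ∀ ⦃w' : InfinitePlace ↥K⦄, w' ≠ InfinitePlace.mk (iotaK K) →
        w' ((⟨θ, hθint⟩ : 𝓞 ↥K) : ↥K) < 1 := by
      intro w' hw'
      have hemb : InfinitePlace.embedding w' ≠ iotaK K := by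
        intro h
        exact hw' (by rw [← InfinitePlace.mk_embedding w', h])
      rw [← InfinitePlace.norm_embedding_eq]
      have : ((⟨θ, hθint⟩ : 𝓞 ↥K) : ↥K) = θ := rfl
      rw [this]
      exact hbound _ hemb
    have h₃ : InfinitePlace.IsReal (InfinitePlace.mk (iotaK K)) :=
      ⟨iotaK K, isReal_iotaK K, rfl⟩
    have := NumberField.is_primitive_element_of_infinitePlace_lt
      (x := (⟨θ, hθint⟩ : 𝓞 ↥K)) (w := InfinitePlace.mk (iotaK K))
      hX h₂ (Or.inl h₃)
    exact this
  exact ⟨θ, ⟨hθint, hθgt, hadj, hbound⟩, happrox⟩
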